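/- Two-layered convolutional neural networks with 3-wide kernels are not universal for d = 3: for a compact domain K ⊂ R^{c×3} containing an open neighborhood of the origin, the closure of Σ_{c,c'}^2 in the uniform norm is a proper subset of C(K, R^{c'×3}). In particular, the function g(x₁,x₂,x₃) = (x₂, 0, 0) (acting in a single channel) cannot be uniformly approximated, because any network f = C₂ ∘ σ ∘ C₁ satisfies that f₁(x,y,0) - f₂(0,x,y) is a function of x alone. -/

import Mathlib

/-- Zero-extension of a finite vector to an integer-indexed sequence. -/
def zpad (d : ℕ) (x : Fin d → ℝ) (m : ℤ) : ℝ :=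
  if h : 0 ≤ m ∧ m < (d : ℤ) then x ⟨m.toNat, by omega⟩ else 0

/-- Zero padding convolution with kernel `w` supported on `[-k, k]`. -/
noncomputable def zconv (d k : ℕ) (w : ℤ → ℝ) (x : Fin d → ℝ) (i : Fin d) : ℝ :=
  ∑ j ∈ Finset.Icc (-(k : ℤ)) (k : ℤ), w j * zpad d x ((i : ℤ) + j)

/-- A zero-padding convolutional layer with kernel size 3 (`k = 1`). -/
def IsConvLayer3 (d c₁ c₂ : ℕ)
    (C : (Fin c₁ → Fin d → ℝ) → (Fin c₂ → Fin d → ℝ)) : Prop :=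
  ∃ (w : Fin c₂ → Fin c₁ → ℤ → ℝ) (δ : Fin c₂ → ℝ),
    ∀ x i p, C x i p = (∑ j, zconv d 1 (w i j) (x j) p) + δ i

/-- `f ∈ Σ_{c,c'}^N` with three-kernel zero-padding convolutional layers. -/
def InSigma3 (σ : ℝ → ℝ) (d : ℕ) :
    (N : ℕ) → (c c' : ℕ) → ((Fin c → Fin d → ℝ) → (Fin c' → Fin d → ℝ)) → Prop
  | 0, _, _, _ => False
  | 1, c, c', f => IsConvLayer3 d c c' f
  | (N + 2), c, c', f =>
      ∃ c₁ C, IsConvLayer3 d c c₁ C ∧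
        ∃ g, InSigma3 σ d (N + 1) c₁ c' g ∧ ∀ x, f x = g (fun i p => σ (C x i p))

/-! ### Auxiliary lemmas -/

lemma zpad_negone (s : Fin 3 → ℝ) : zpad 3 s (-1) = 0 := by simp [zpad]

lemma zpad_z (s : Fin 3 → ℝ) : zpad 3 s 0 = s 0 := by
  rw [zpad, dif_pos (by omega)]
  rfl

lemma zpad_o (s : Fin 3 → ℝ) : zpad 3 s 1 = s 1 := by
  rw [zpad, dif_pos (by omega)]
  rfl

lemma zpad_t (s : Fin 3 → ℝ) : zpad 3 s 2 = s 2 := by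
  rw [zpad, dif_pos (by omega)]
  rfl

lemma zpad_th (s : Fin 3 → ℝ) : zpad 3 s 3 = 0 := by simp [zpad]

lemma Icc_exp : Finset.Icc (-1:ℤ) 1 = {-1, 0, 1} := by decide

lemma zconv0 (w : ℤ → ℝ) (s : Fin 3 → ℝ) :
    zconv 3 1 w s 0 = w 0 * s 0 + w 1 * s 1 := by
  rw [zconv]
  simp only [Nat.cast_one]
  rw [Icc_exp, show ({-1,0,1} : Finset ℤ) = insert (-1) (insert 0 {1}) from rfl,
    Finset.sum_insert (by decide), Finset.sum_insert (by decide), Finset.sum_singleton]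
  norm_num [zpad_negone, zpad_z, zpad_o]

lemma zconv1 (w : ℤ → ℝ) (s : Fin 3 → ℝ) :
    zconv 3 1 w s 1 = w (-1) * s 0 + w 0 * s 1 + w 1 * s 2 := by
  rw [zconv]
  simp only [Nat.cast_one]
  rw [Icc_exp, show ({-1,0,1} : Finset ℤ) = insert (-1) (insert 0 {1}) from rfl,
    Finset.sum_insert (by decide), Finset.sum_insert (by decide), Finset.sum_singleton]
  norm_num [zpad_z, zpad_o, zpad_t]
  ring

lemma zconv2 (w : ℤ → ℝ) (s : Fin 3 → ℝ) :
    zconv 3 1 w s 2 = w (-1) * s 1 + w 0 * s 2 := by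
  rw [zconv]
  simp only [Nat.cast_one]
  rw [Icc_exp, show ({-1,0,1} : Finset ℤ) = insert (-1) (insert 0 {1}) from rfl,
    Finset.sum_insert (by decide), Finset.sum_insert (by decide), Finset.sum_singleton]
  norm_num [zpad_o, zpad_t, zpad_th]

/-- Input that is a single value `y` in channel `0` at position `q`. -/
def dvec (c : ℕ) (hc : 0 < c) (q : Fin 3) (y : ℝ) : Fin c → Fin 3 → ℝ :=
  fun j p => if j = ⟨0, hc⟩ ∧ p = q then y else 0

lemma dvec_self (c : ℕ) (hc : 0 < c) (q : Fin 3) (y : ℝ) :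
    dvec c hc q y ⟨0, hc⟩ = fun p => if p = q then y else 0 := by
  funext p; simp [dvec]

lemma zconv_zero_fn (w : ℤ → ℝ) (p : Fin 3) : zconv 3 1 w (fun _ => 0) p = 0 := by
  simp [zconv, zpad]

lemma hiddenEval (c c₁ : ℕ) (hc : 0 < c) (w1 : Fin c₁ → Fin c → ℤ → ℝ) (δ1 : Fin c₁ → ℝ)
    (C : (Fin c → Fin 3 → ℝ) → (Fin c₁ → Fin 3 → ℝ))
    (hC : ∀ x i p, C x i p = (∑ j, zconv 3 1 (w1 i j) (x j) p) + δ1 i)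
    (q : Fin 3) (y : ℝ) (m : Fin c₁) (p : Fin 3) :
    C (dvec c hc q y) m p
      = zconv 3 1 (w1 m ⟨0, hc⟩) (fun p' => if p' = q then y else 0) p + δ1 m := by
  rw [hC]
  congr 1
  rw [Finset.sum_eq_single (⟨0, hc⟩ : Fin c)]
  · rw [dvec_self]
  · intro j _ hj
    have : dvec c hc q y j = fun _ => 0 := by funext p'; simp [dvec, hj]
    rw [this, zconv_zero_fn]
  · intro h; exact absurd (Finset.mem_univ _) h

section hiddenvals

variable (c c₁ : ℕ) (hc : 0 < c) (w1 : Fin c₁ → Fin c → ℤ → ℝ) (δ1 : Fin c₁ → ℝ)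
  (C : (Fin c → Fin 3 → ℝ) → (Fin c₁ → Fin 3 → ℝ))
  (hC : ∀ x i p, C x i p = (∑ j, zconv 3 1 (w1 i j) (x j) p) + δ1 i)
  (y : ℝ) (m : Fin c₁)

include hC

lemma Cu0 : C (dvec c hc 1 y) m 0 = w1 m ⟨0, hc⟩ 1 * y + δ1 m := by
  rw [hiddenEval c c₁ hc w1 δ1 C hC, zconv0]
  simp [show (0:Fin 3) ≠ 1 from by decide, show (0:Fin 3) ≠ 2 from by decide, show (1:Fin 3) ≠ 2 from by decide, show (1:Fin 3) ≠ 0 from by decide, show (2:Fin 3) ≠ 0 from by decide, show (2:Fin 3) ≠ 1 from by decide]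

lemma Cu1 : C (dvec c hc 1 y) m 1 = w1 m ⟨0, hc⟩ 0 * y + δ1 m := by
  rw [hiddenEval c c₁ hc w1 δ1 C hC, zconv1]
  simp [show (0:Fin 3) ≠ 1 from by decide, show (0:Fin 3) ≠ 2 from by decide, show (1:Fin 3) ≠ 2 from by decide, show (1:Fin 3) ≠ 0 from by decide, show (2:Fin 3) ≠ 0 from by decide, show (2:Fin 3) ≠ 1 from by decide]

lemma Cv0 : C (dvec c hc 2 y) m 0 = δ1 m := by
  rw [hiddenEval c c₁ hc w1 δ1 C hC, zconv0]
  simp [show (0:Fin 3) ≠ 1 from by decide, show (0:Fin 3) ≠ 2 from by decide, show (1:Fin 3) ≠ 2 from by decide, show (1:Fin 3) ≠ 0 from by decide, show (2:Fin 3) ≠ 0 from by decide, show (2:Fin 3) ≠ 1 from by decide]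

lemma Cv1 : C (dvec c hc 2 y) m 1 = w1 m ⟨0, hc⟩ 1 * y + δ1 m := by
  rw [hiddenEval c c₁ hc w1 δ1 C hC, zconv1]
  simp [show (0:Fin 3) ≠ 1 from by decide, show (0:Fin 3) ≠ 2 from by decide, show (1:Fin 3) ≠ 2 from by decide, show (1:Fin 3) ≠ 0 from by decide, show (2:Fin 3) ≠ 0 from by decide, show (2:Fin 3) ≠ 1 from by decide]

lemma Cv2 : C (dvec c hc 2 y) m 2 = w1 m ⟨0, hc⟩ 0 * y + δ1 m := by
  rw [hiddenEval c c₁ hc w1 δ1 C hC, zconv2]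
  simp [show (0:Fin 3) ≠ 1 from by decide, show (0:Fin 3) ≠ 2 from by decide, show (1:Fin 3) ≠ 2 from by decide, show (1:Fin 3) ≠ 0 from by decide, show (2:Fin 3) ≠ 0 from by decide, show (2:Fin 3) ≠ 1 from by decide]

end hiddenvals

lemma coordbd {c' : ℕ} (F G : Fin c' → Fin 3 → ℝ) (i : Fin c') (p : Fin 3) :
    dist (F i p) (G i p) ≤ dist F G :=
  le_trans (dist_le_pi_dist (F i) (G i) p) (dist_le_pi_dist F G i)

/-- Two-layered three-kernel CNNs are not universal for `d = 3`: on a compact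
domain `K ⊆ ℝ^{c×3}` containing an open ball around the origin, there is a
continuous target—in particular `g(x₁,x₂,x₃) = (x₂,0,0)` in the first channel—
that cannot be uniformly approximated by elements of `Σ_{c,c'}^2`. -/
theorem two_layer_not_universal_d3 (σ : ℝ → ℝ) (hσ : Continuous σ) (c c' : ℕ)
    (hc : 0 < c) (hc' : 0 < c') (K : Set (Fin c → Fin 3 → ℝ)) (hK : IsCompact K)
    (ε₀ : ℝ) (hε₀ : 0 < ε₀) (hball : Metric.ball 0 ε₀ ⊆ K) :
    ∃ g : (Fin c → Fin 3 → ℝ) → (Fin c' → Fin 3 → ℝ),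
      g = (fun x i p => if i = (⟨0, hc'⟩ : Fin c') ∧ p = (0 : Fin 3)
            then x ⟨0, hc⟩ 1 else 0) ∧
      Continuous g ∧
      ¬ (∀ ε > 0, ∃ f, InSigma3 σ 3 2 c c' f ∧ ∀ x ∈ K, dist (f x) (g x) ≤ ε) := by
  classical
  refine ⟨_, rfl, ?_, ?_⟩
  · -- continuity
    apply continuous_pi; intro i; apply continuous_pi; intro p
    by_cases h : i = (⟨0, hc'⟩ : Fin c') ∧ p = (0 : Fin 3)
    · simp only [if_pos h]
      exact (continuous_apply (1 : Fin 3)).comp (continuous_apply _)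
    · simp only [if_neg h]
      exact continuous_const
  · intro hall
    obtain ⟨f, hf, happ⟩ := hall (ε₀ / 8) (by positivity)
    obtain ⟨c₁, C, ⟨w1, δ1, hC⟩, g2, hg2, hfe⟩ := hf
    obtain ⟨w2, δ2, hg⟩ := hg2
    -- the key invariant of two-layer networks
    have key : ∀ y : ℝ,
        f (dvec c hc 1 y) ⟨0, hc'⟩ 0 - f (dvec c hc 2 y) ⟨0, hc'⟩ 1
          = -(∑ m, w2 ⟨0, hc'⟩ m (-1) * σ (δ1 m)) := by
      intro y
      have h1 : f (dvec c hc 1 y) ⟨0, hc'⟩ 0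
          = (∑ m, (w2 ⟨0, hc'⟩ m 0 * σ (w1 m ⟨0, hc⟩ 1 * y + δ1 m)
              + w2 ⟨0, hc'⟩ m 1 * σ (w1 m ⟨0, hc⟩ 0 * y + δ1 m))) + δ2 ⟨0, hc'⟩ := by
        rw [hfe, hg]
        congr 1
        apply Finset.sum_congr rfl
        intro m _
        rw [zconv0]
        simp only [Cu0 c c₁ hc w1 δ1 C hC y m, Cu1 c c₁ hc w1 δ1 C hC y m]
      have h2 : f (dvec c hc 2 y) ⟨0, hc'⟩ 1
          = (∑ m, (w2 ⟨0, hc'⟩ m (-1) * σ (δ1 m)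
              + w2 ⟨0, hc'⟩ m 0 * σ (w1 m ⟨0, hc⟩ 1 * y + δ1 m)
              + w2 ⟨0, hc'⟩ m 1 * σ (w1 m ⟨0, hc⟩ 0 * y + δ1 m))) + δ2 ⟨0, hc'⟩ := by
        rw [hfe, hg]
        congr 1
        apply Finset.sum_congr rfl
        intro m _
        rw [zconv1]
        simp only [Cv0 c c₁ hc w1 δ1 C hC y m, Cv1 c c₁ hc w1 δ1 C hC y m,
          Cv2 c c₁ hc w1 δ1 C hC y m]
      rw [h1, h2, show ∀ S T d : ℝ, S + d - (T + d) = S - T from fun _ _ _ => by ring,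
        ← Finset.sum_sub_distrib, ← Finset.sum_neg_distrib]
      apply Finset.sum_congr rfl
      intro m _
      ring
    -- membership of the test points
    have hmem : ∀ (q : Fin 3) (y : ℝ), |y| < ε₀ → dvec c hc q y ∈ K := by
      intro q y hy
      apply hball
      rw [Metric.mem_ball, dist_pi_lt_iff hε₀]
      intro j
      rw [dist_pi_lt_iff hε₀]
      intro p
      rw [Real.dist_eq]
      simp only [Pi.zero_apply, sub_zero, dvec]
      split
      · exact hy
      · simpa using hε₀
    -- per coordinate bounds
    have hbd : ∀ x ∈ K, ∀ (i : Fin c') (p : Fin 3),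
        dist (f x i p) (if i = (⟨0, hc'⟩ : Fin c') ∧ p = (0 : Fin 3)
          then x ⟨0, hc⟩ 1 else 0) ≤ ε₀ / 8 := by
      intro x hx i p
      exact le_trans (coordbd (f x)
        (fun i p => if i = (⟨0, hc'⟩ : Fin c') ∧ p = (0 : Fin 3)
          then x ⟨0, hc⟩ 1 else 0) i p) (happ x hx)
    have habs : |(ε₀ / 2 : ℝ)| < ε₀ := by rw [abs_of_pos (by positivity)]; linarith
    have habs' : |(-(ε₀ / 2) : ℝ)| < ε₀ := by rw [abs_neg]; exact habs
    have hu1 := hbd _ (hmem 1 (ε₀ / 2) habs) ⟨0, hc'⟩ 0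
    have hv1 := hbd _ (hmem 2 (ε₀ / 2) habs) ⟨0, hc'⟩ 1
    have hu2 := hbd _ (hmem 1 (-(ε₀ / 2)) habs') ⟨0, hc'⟩ 0
    have hv2 := hbd _ (hmem 2 (-(ε₀ / 2)) habs') ⟨0, hc'⟩ 1
    rw [Real.dist_eq] at hu1 hv1 hu2 hv2
    simp only [and_self, if_true, dvec, show (1 : Fin 3) ≠ 0 from by decide, and_false,
      if_false, sub_zero, if_pos] at hu1 hv1 hu2 hv2
    have k1 := key (ε₀ / 2)
    have k2 := key (-(ε₀ / 2))
    obtain ⟨a1, a2⟩ := abs_le.mp hu1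
    obtain ⟨b1, b2⟩ := abs_le.mp hv1
    obtain ⟨a1', a2'⟩ := abs_le.mp hu2
    obtain ⟨b1', b2'⟩ := abs_le.mp hv2
    linarith
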